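/- (Lemma 6 of the appendix.) Let 2m+2 ≤ i ≤ n and 1 ≤ t ≤ i−2m−1, and for each j = t, …, i let x_j be a vector of k distinct locations of column j, with u_j the complementary vector of the remaining r−k locations of column j. Then H(Z_{x_t} | Z_{x_{t+1:i−m−1}}, Z_{u_{i−2m:i}}) − H(Z_{x_t} | Z_{x_{t+1:i−m−1}}, Z_{u_{i−2m:i}}, Z_{x_{i−m}}) ≤ k² · log(1 + ξ²/(η(1+η))). -/

import Mathlib

open Finset

/-- Covariance matrix of the GP: kernel plus sensor noise on the diagonal. -/
noncomputable def SigmaMat {D : Type*} [DecidableEq D] (K : D → D → ℝ) (σn2 : ℝ) :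
    Matrix D D ℝ :=
  Matrix.of fun x y => K x y + if x = y then σn2 else 0

/-- Submatrix of covariances between the entries of two finsets of locations. -/
noncomputable def subMat {D : Type*} (Cov : Matrix D D ℝ) (a s : Finset D) :
    Matrix ↥a ↥s ℝ :=
  Matrix.of fun p q => Cov p.1 q.1

/-- Posterior covariance `Σ_{aa|s} = Σ_{aa} - Σ_{as} Σ_{ss}⁻¹ Σ_{sa}`. -/
noncomputable def postCov {D : Type*} [DecidableEq D] (Cov : Matrix D D ℝ) (a s : Finset D) :
    Matrix ↥a ↥a ℝ :=
  subMat Cov a a - subMat Cov a s * (subMat Cov s s)⁻¹ * subMat Cov s a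

/-- Gaussian conditional entropy `H(Z_a | Z_s) = (1/2) log((2πe)^{|a|} det Σ_{aa|s})`. -/
noncomputable def condEnt {D : Type*} [DecidableEq D] (Cov : Matrix D D ℝ) (a s : Finset D) : ℝ :=
  (1/2) * Real.log ((2 * Real.pi * Real.exp 1) ^ a.card * (postCov Cov a s).det)

/-- Gaussian joint entropy `H(Z_a)`. -/
noncomputable def ent {D : Type*} [DecidableEq D] (Cov : Matrix D D ℝ) (a : Finset D) : ℝ :=
  condEnt Cov a ∅

/-- Mutual information `I(Z_a ; Z_b) = H(Z_a) - H(Z_a | Z_b)`. -/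
noncomputable def mutInf {D : Type*} [DecidableEq D] (Cov : Matrix D D ℝ) (a b : Finset D) : ℝ :=
  ent Cov a - condEnt Cov a b

/-- Conditional mutual information `I(Z_a ; Z_b | Z_s) = H(Z_a | Z_s) - H(Z_a | Z_s, Z_b)`. -/
noncomputable def condMutInf {D : Type*} [DecidableEq D] (Cov : Matrix D D ℝ)
    (a b s : Finset D) : ℝ :=
  condEnt Cov a s - condEnt Cov a (s ∪ b)

/-- Posterior variance `Σ_{yy|A}` of a single location `y`. -/
noncomputable def postVar {D : Type*} [DecidableEq D] (Cov : Matrix D D ℝ) (y : D)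
    (A : Finset D) : ℝ :=
  postCov Cov {y} A ⟨y, Finset.mem_singleton_self y⟩ ⟨y, Finset.mem_singleton_self y⟩

/-- Concatenation `x_{i:j}` of the column selections from column `i` to column `j`. -/
def seg {D : Type*} [DecidableEq D] (x : ℕ → Finset D) (i j : ℕ) : Finset D :=
  (Finset.Icc i j).biUnion x

/-- The set of the `r` locations of column `i`. -/
def column {D : Type*} [Fintype D] (col : D → ℕ) (i : ℕ) : Finset D :=
  Finset.univ.filter (fun p => col p = i)

/-- The complementary vector `u_i` of unobserved locations of column `i` for a path `x`. -/
def ucomp {D : Type*} [Fintype D] [DecidableEq D] (col : D → ℕ) (x : ℕ → Finset D) :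
    ℕ → Finset D :=
  fun i => column col i \ x i

/-- A path selects, in every column `i = 1,…,n`, a vector of `k` distinct locations of
column `i`. -/
def IsPath {D : Type*} [Fintype D] (col : D → ℕ) (n k : ℕ) (x : ℕ → Finset D) : Prop :=
  ∀ i, 1 ≤ i → i ≤ n → x i ⊆ column col i ∧ (x i).card = k

namespace Lemma6Aux
open Matrix
set_option linter.unusedSectionVars false

variable {D : Type*} [Fintype D] [DecidableEq D]

/-- extension of a vector on a finset by zero -/
noncomputable def vext (B : Finset D) (x : ↥B → ℝ) : D → ℝ :=
  fun d => if h : d ∈ B then x ⟨d, h⟩ else 0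

lemma sum_vext (B : Finset D) (x : ↥B → ℝ) (F : D → ℝ) :
    ∑ d : D, F d * vext B x d = ∑ q : ↥B, F q.1 * x q := by
  classical
  have h1 : ∀ q : ↥B, F q.1 * x q = F q.1 * vext B x q.1 := fun q => by
    simp [vext, q.2]
  rw [Finset.sum_congr rfl (fun q _ => h1 q), Finset.univ_eq_attach,
    Finset.sum_attach B (fun d => F d * vext B x d)]
  exact (Finset.sum_subset (Finset.subset_univ B) (fun d _ hd => by simp [vext, hd])).symm

lemma quad_eq (M : Matrix D D ℝ) (B : Finset D) (x : ↥B → ℝ) :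
    vext B x ⬝ᵥ (M *ᵥ vext B x) = x ⬝ᵥ (subMat M B B *ᵥ x) := by
  classical
  have h1 : vext B x ⬝ᵥ (M *ᵥ vext B x) = ∑ d : D, (M *ᵥ vext B x) d * vext B x d := by
    simp [dotProduct, mul_comm]
  rw [h1, sum_vext]
  have h2 : ∀ q : ↥B, (M *ᵥ vext B x) q.1 = (subMat M B B *ᵥ x) q := by
    intro q
    show ∑ d : D, M q.1 d * vext B x d = _
    rw [sum_vext]
    rfl
  simp only [h2]
  simp [dotProduct, mul_comm]

lemma vext_ne_zero {B : Finset D} {x : ↥B → ℝ} (hx : x ≠ 0) : vext B x ≠ 0 := by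
  obtain ⟨q, hq⟩ := Function.ne_iff.mp hx
  intro h
  apply hq
  have := congrFun h q.1
  simpa [vext, q.2] using this

lemma subMat_posdef {M : Matrix D D ℝ} (hM : M.PosDef) (B : Finset D) :
    (subMat M B B).PosDef := by
  refine Matrix.PosDef.of_dotProduct_mulVec_pos ?_ ?_
  · ext i j
    have := congrFun (congrFun hM.1 i.1) j.1
    simpa [Matrix.conjTranspose_apply, subMat] using this
  · intro v hv
    have := hM.dotProduct_mulVec_pos (vext_ne_zero hv)
    rw [star_trivial] at this
    rw [star_trivial]
    rwa [quad_eq] at this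


/-- disjoint-union block equivalence -/
def unionEquiv (a s : Finset D) (h : Disjoint a s) : ↥a ⊕ ↥s ≃ ↥(a ∪ s) where
  toFun := Sum.elim (fun p => ⟨p.1, Finset.mem_union_left s p.2⟩)
    (fun p => ⟨p.1, Finset.mem_union_right a p.2⟩)
  invFun := fun p =>
    if h' : p.1 ∈ a then Sum.inl ⟨p.1, h'⟩
    else Sum.inr ⟨p.1, (Finset.mem_union.mp p.2).resolve_left h'⟩
  left_inv := by
    rintro (⟨p, hp⟩ | ⟨p, hp⟩)
    · simp [hp]
    · simp [Finset.disjoint_right.mp h hp]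
  right_inv := by
    rintro ⟨p, hp⟩
    by_cases h' : p ∈ a <;> simp [h']

lemma det_schur {M : Matrix D D ℝ} (hM : M.PosDef) (a s : Finset D) (h : Disjoint a s) :
    (subMat M (a ∪ s) (a ∪ s)).det = (subMat M s s).det * (postCov M a s).det := by
  classical
  have hpd := subMat_posdef hM s
  haveI : Invertible (subMat M s s) := hpd.isUnit.invertible
  let e := unionEquiv a s h
  have hb : (subMat M (a ∪ s) (a ∪ s)).submatrix e e
      = Matrix.fromBlocks (subMat M a a) (subMat M a s) (subMat M s a) (subMat M s s) := by
    ext i j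
    cases i <;> cases j <;> rfl
  have hdet : (subMat M (a ∪ s) (a ∪ s)).det
      = (Matrix.fromBlocks (subMat M a a) (subMat M a s) (subMat M s a) (subMat M s s)).det := by
    rw [← hb, Matrix.det_submatrix_equiv_self]
  rw [hdet, Matrix.det_fromBlocks₂₂, Matrix.invOf_eq_nonsing_inv]
  rfl

lemma postCov_det {M : Matrix D D ℝ} (hM : M.PosDef) (a s : Finset D) (h : Disjoint a s) :
    (postCov M a s).det = (subMat M (a ∪ s) (a ∪ s)).det / (subMat M s s).det := by
  rw [det_schur hM a s h]
  field_simp [(subMat_posdef hM s).det_pos.ne']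

lemma condEnt_sub {M : Matrix D D ℝ} (hM : M.PosDef) (a s1 s2 : Finset D)
    (h1 : Disjoint a s1) (h2 : Disjoint a s2) :
    condEnt M a s1 - condEnt M a s2 =
      (1/2) * ((Real.log (subMat M (a ∪ s1) (a ∪ s1)).det - Real.log (subMat M s1 s1).det)
        - (Real.log (subMat M (a ∪ s2) (a ∪ s2)).det - Real.log (subMat M s2 s2).det)) := by
  have key : ∀ (s : Finset D), Disjoint a s → condEnt M a s =
      (1/2) * ((a.card : ℝ) * Real.log (2 * Real.pi * Real.exp 1)
        + (Real.log (subMat M (a ∪ s) (a ∪ s)).det - Real.log (subMat M s s).det)) := by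
    intro s hs
    unfold condEnt
    rw [postCov_det hM a s hs]
    rw [Real.log_mul (by positivity)
      (div_ne_zero (subMat_posdef hM (a ∪ s)).det_pos.ne' (subMat_posdef hM s).det_pos.ne'),
      Real.log_pow,
      Real.log_div (subMat_posdef hM (a ∪ s)).det_pos.ne' (subMat_posdef hM s).det_pos.ne']
  rw [key s1 h1, key s2 h2]
  ring

lemma postVar_det {M : Matrix D D ℝ} (p : D) (S : Finset D) :
    (postCov M {p} S).det = postVar M p S := by
  haveI : Unique ↥({p} : Finset D) :=
    ⟨⟨⟨p, Finset.mem_singleton_self p⟩⟩, by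
      rintro ⟨y, hy⟩
      ext
      simpa using hy⟩
  have hd : (default : ↥({p} : Finset D)) = ⟨p, Finset.mem_singleton_self p⟩ := by
    have := (default : ↥({p} : Finset D)).2
    rw [Finset.mem_singleton] at this
    exact Subtype.ext this
  rw [Matrix.det_unique, hd]
  rfl

lemma postVar_pos {M : Matrix D D ℝ} (hM : M.PosDef) (p : D) (S : Finset D) (hp : p ∉ S) :
    0 < postVar M p S := by
  rw [← postVar_det]
  rw [postCov_det hM _ _ (by simpa using hp)]
  exact div_pos (subMat_posdef hM _).det_pos (subMat_posdef hM _).det_pos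

lemma logdet_insert {M : Matrix D D ℝ} (hM : M.PosDef) (p : D) (S : Finset D) (hp : p ∉ S) :
    Real.log (subMat M (insert p S) (insert p S)).det
      = Real.log (postVar M p S) + Real.log (subMat M S S).det := by
  have h : Disjoint ({p} : Finset D) S := by simpa using hp
  have hd := det_schur hM {p} S h
  rw [postVar_det] at hd
  rw [← Finset.insert_eq] at hd
  rw [hd, Real.log_mul (subMat_posdef hM S).det_pos.ne' (postVar_pos hM p S hp).ne']
  ring


lemma postVar_eq {M : Matrix D D ℝ} (hsym : ∀ u v : D, M u v = M v u)
    (p : D) (A : Finset D) :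
    postVar M p A = M p p -
      (fun q : ↥A => M p q.1) ⬝ᵥ ((subMat M A A)⁻¹ *ᵥ (fun q : ↥A => M p q.1)) := by
  unfold postVar postCov
  simp only [Matrix.sub_apply]
  have h1 : subMat M {p} {p} ⟨p, Finset.mem_singleton_self p⟩ ⟨p, Finset.mem_singleton_self p⟩
      = M p p := rfl
  rw [h1]
  congr 1
  simp only [Matrix.mul_apply, dotProduct, Matrix.mulVec, Finset.sum_mul, Finset.mul_sum]
  rw [Finset.sum_comm]
  refine Finset.sum_congr rfl fun q _ => Finset.sum_congr rfl fun q' _ => ?_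
  show M p q.1 * (subMat M A A)⁻¹ q q' * M q'.1 p = M p q.1 * ((subMat M A A)⁻¹ q q' * M p q'.1)
  rw [hsym q'.1 p]
  ring

lemma postVar_quad {M : Matrix D D ℝ} (hM : M.PosDef) (hsym : ∀ u v : D, M u v = M v u)
    (p : D) (A : Finset D) :
    postVar M p A =
      (Pi.single p 1 - vext A ((subMat M A A)⁻¹ *ᵥ (fun q : ↥A => M p q.1))) ⬝ᵥ
        (M *ᵥ (Pi.single p 1 - vext A ((subMat M A A)⁻¹ *ᵥ (fun q : ↥A => M p q.1)))) := by
  classical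
  set c : ↥A → ℝ := fun q => M p q.1 with hc
  set w : ↥A → ℝ := (subMat M A A)⁻¹ *ᵥ c with hw
  have hSw : subMat M A A *ᵥ w = c := by
    rw [hw, Matrix.mulVec_mulVec, Matrix.mul_nonsing_inv _ (subMat_posdef hM A).det_pos.ne'.isUnit,
      Matrix.one_mulVec]
  have huu : (Pi.single p 1 : D → ℝ) ⬝ᵥ (M *ᵥ Pi.single p 1) = M p p := by
    simp [Matrix.mulVec_single]
  have huv : (Pi.single p 1 : D → ℝ) ⬝ᵥ (M *ᵥ vext A w) = c ⬝ᵥ w := by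
    rw [single_dotProduct, one_mul]
    show ∑ d : D, M p d * vext A w d = _
    rw [sum_vext]
    rfl
  have hvu : vext A w ⬝ᵥ (M *ᵥ Pi.single p 1) = c ⬝ᵥ w := by
    rw [show M *ᵥ Pi.single p 1 = fun i => M i p * 1 from by
      funext i; simp [Matrix.mulVec, dotProduct, Pi.single_apply]]
    have : ∀ d : D, vext A w d * (M d p * 1) = (fun d => M d p) d * vext A w d := by
      intro d; ring
    rw [show (vext A w ⬝ᵥ fun i => M i p * 1) = ∑ d : D, (fun d => M d p) d * vext A w d from
      Finset.sum_congr rfl fun d _ => this d]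
    rw [sum_vext]
    exact Finset.sum_congr rfl fun q _ => by rw [hsym q.1 p]
  have hvv : vext A w ⬝ᵥ (M *ᵥ vext A w) = c ⬝ᵥ w := by
    rw [quad_eq, hSw]
    simp [dotProduct, mul_comm]
  rw [Matrix.mulVec_sub, sub_dotProduct, dotProduct_sub, dotProduct_sub,
    huu, huv, hvu, hvv]
  rw [postVar_eq hsym p A]
  ring


lemma sigma_decomp (K : D → D → ℝ) (σn2 : ℝ) :
    SigmaMat K σn2 = Matrix.of K + σn2 • (1 : Matrix D D ℝ) := by
  ext x y
  by_cases h : x = y <;> simp [SigmaMat, Matrix.one_apply, h]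

lemma sigma_posdef {K : D → D → ℝ} {σn2 : ℝ} (hKpsd : (Matrix.of K).PosSemidef)
    (hn : 0 < σn2) : (SigmaMat K σn2).PosDef := by
  rw [sigma_decomp]
  refine Matrix.PosDef.posSemidef_add hKpsd ?_
  have : σn2 • (1 : Matrix D D ℝ) = Matrix.diagonal (fun _ => σn2) := by
    ext u v
    by_cases h : u = v <;> simp [Matrix.one_apply, Matrix.diagonal_apply, h]
  rw [this]
  exact Matrix.PosDef.diagonal (fun _ => hn)

lemma sigma_symm {K : D → D → ℝ} {σn2 : ℝ} (hKsymm : ∀ p q : D, K p q = K q p) :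
    ∀ u v : D, SigmaMat K σn2 u v = SigmaMat K σn2 v u := by
  intro u v
  by_cases h : u = v <;> simp [SigmaMat, hKsymm u v, h, eq_comm]

lemma sigma_quad_lower {K : D → D → ℝ} {σn2 : ℝ} (hKpsd : (Matrix.of K).PosSemidef)
    (z : D → ℝ) :
    σn2 * (z ⬝ᵥ z) ≤ z ⬝ᵥ (SigmaMat K σn2 *ᵥ z) := by
  rw [sigma_decomp, Matrix.add_mulVec, dotProduct_add, Matrix.smul_mulVec,
    Matrix.one_mulVec, dotProduct_smul]
  have h0 : 0 ≤ z ⬝ᵥ (Matrix.of K *ᵥ z) := by simpa [star_trivial] using hKpsd.dotProduct_mulVec_nonneg z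
  have : σn2 • (z ⬝ᵥ z) = σn2 * (z ⬝ᵥ z) := rfl
  linarith [h0, this.ge]

lemma postVar_lower {K : D → D → ℝ} {σn2 : ℝ} (hKpsd : (Matrix.of K).PosSemidef)
    (hKsymm : ∀ p q : D, K p q = K q p) (hn : 0 < σn2)
    (p : D) (A : Finset D) (hp : p ∉ A) :
    σn2 ≤ postVar (SigmaMat K σn2) p A := by
  have hpd := sigma_posdef hKpsd hn
  rw [postVar_quad hpd (sigma_symm hKsymm) p A]
  set z : D → ℝ := Pi.single p 1 -
    vext A ((subMat (SigmaMat K σn2) A A)⁻¹ *ᵥ (fun q : ↥A => SigmaMat K σn2 p q.1)) with hz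
  have hzp : z p = 1 := by
    simp [hz, vext, hp]
  have h1 : (1 : ℝ) ≤ z ⬝ᵥ z := by
    have h2 : z p * z p ≤ ∑ d : D, z d * z d :=
      Finset.single_le_sum (fun d _ => mul_self_nonneg (z d)) (Finset.mem_univ p)
    rw [hzp] at h2
    simpa [dotProduct] using h2
  calc σn2 = σn2 * 1 := (mul_one σn2).symm
    _ ≤ σn2 * (z ⬝ᵥ z) := by nlinarith
    _ ≤ z ⬝ᵥ (SigmaMat K σn2 *ᵥ z) := sigma_quad_lower hKpsd z

lemma postVar_empty (M : Matrix D D ℝ) (p : D) : postVar M p ∅ = M p p := by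
  haveI : IsEmpty ↥(∅ : Finset D) := ⟨fun y => absurd y.2 (Finset.notMem_empty y.1)⟩
  unfold postVar postCov
  simp [Matrix.mul_apply, Finset.univ_eq_empty]
  rfl

lemma diag_pos {M : Matrix D D ℝ} (hM : M.PosDef) (q : D) : 0 < M q q := by
  have hne : (Pi.single q 1 : D → ℝ) ≠ 0 := by
    intro h
    have := congrFun h q
    simp at this
  have := hM.dotProduct_mulVec_pos hne
  rw [star_trivial] at this
  simpa [Matrix.mulVec_single, single_dotProduct] using this

lemma postVar_single {M : Matrix D D ℝ} (hM : M.PosDef) (hsym : ∀ u v : D, M u v = M v u)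
    (p q : D) :
    postVar M p {q} = M p p - M p q * ((M q q)⁻¹ * M p q) := by
  classical
  haveI : Unique ↥({q} : Finset D) :=
    ⟨⟨⟨q, Finset.mem_singleton_self q⟩⟩, by
      rintro ⟨y, hy⟩
      rw [Finset.mem_singleton] at hy
      exact Subtype.ext hy⟩
  have hd : ((default : ↥({q} : Finset D)) : D) = q := by
    have := (default : ↥({q} : Finset D)).2
    rwa [Finset.mem_singleton] at this
  have hqq := diag_pos hM q
  have hinv : (subMat M {q} {q})⁻¹ = Matrix.of (fun _ _ => (M q q)⁻¹) := by
    apply Matrix.inv_eq_right_inv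
    ext i j
    have hij : i = j := Subsingleton.elim i j
    have hi : (i : D) = q := by
      have := i.2
      rwa [Finset.mem_singleton] at this
    rw [Matrix.mul_apply, Fintype.sum_unique]
    show M i.1 (default : ↥({q} : Finset D)).1 * (M q q)⁻¹ = (1 : Matrix _ _ ℝ) i j
    rw [hi, hd, mul_inv_cancel₀ hqq.ne']
    subst hij
    rw [Matrix.one_apply_eq]
  rw [postVar_eq hsym p {q}, hinv]
  simp only [dotProduct, Matrix.mulVec, Fintype.sum_unique, Matrix.of_apply, hd]


lemma var_drop (M : Matrix D D ℝ) (δ : ℝ)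
    (hsub' : ∀ (p q : D) (A : Finset D), p ∉ A → q ∉ A → p ≠ q →
      postVar M p A - postVar M p (insert q A) ≤ postVar M p ∅ - postVar M p {q})
    (p : D) (b : Finset D) :
    ∀ (S : Finset D), p ∉ S → p ∉ b → Disjoint b S →
      (∀ q ∈ b, postVar M p ∅ - postVar M p {q} ≤ δ) →
      postVar M p S - postVar M p (S ∪ b) ≤ b.card * δ := by
  induction b using Finset.induction_on with
  | empty => intro S hpS _ _ _; simp
  | @insert q b' hqb ih =>
    intro S hpS hpb hdisj hq'
    have h1 : S ∪ insert q b' = insert q (S ∪ b') := by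
      ext d
      simp only [Finset.mem_insert, Finset.mem_union]
      tauto
    have hpq : p ≠ q := fun h => hpb (h ▸ Finset.mem_insert_self q b')
    have hpSb : p ∉ S ∪ b' := by
      simp only [Finset.mem_union, not_or]
      exact ⟨hpS, fun h => hpb (Finset.mem_insert_of_mem h)⟩
    have hqSb : q ∉ S ∪ b' := by
      simp only [Finset.mem_union, not_or]
      exact ⟨Finset.disjoint_left.mp hdisj (Finset.mem_insert_self q b'), hqb⟩
    have step := hsub' p q (S ∪ b') hpSb hqSb hpq
    have hstep2 := hq' q (Finset.mem_insert_self q b')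
    have ihapp := ih S hpS (fun h => hpb (Finset.mem_insert_of_mem h))
      (Finset.disjoint_of_subset_left (Finset.subset_insert q b') hdisj)
      (fun q' h => hq' q' (Finset.mem_insert_of_mem h))
    rw [h1]
    have hcard : (insert q b').card = b'.card + 1 := Finset.card_insert_of_notMem hqb
    have : postVar M p S - postVar M p (insert q (S ∪ b'))
        = (postVar M p S - postVar M p (S ∪ b'))
          + (postVar M p (S ∪ b') - postVar M p (insert q (S ∪ b'))) := by ring
    rw [this, hcard]
    push_cast
    linarith [step.trans hstep2, ihapp]

lemma telescope {K : D → D → ℝ} {σn2 δ : ℝ} (hKpsd : (Matrix.of K).PosSemidef)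
    (hKsymm : ∀ p q : D, K p q = K q p) (hn : 0 < σn2) (hδ : 0 ≤ δ)
    (hsub' : ∀ (p q : D) (A : Finset D), p ∉ A → q ∉ A → p ≠ q →
      postVar (SigmaMat K σn2) p A - postVar (SigmaMat K σn2) p (insert q A)
        ≤ postVar (SigmaMat K σn2) p ∅ - postVar (SigmaMat K σn2) p {q})
    (b s : Finset D) (a : Finset D) :
    Disjoint a s → Disjoint a b → Disjoint s b →
    (∀ p ∈ a, ∀ q ∈ b, postVar (SigmaMat K σn2) p ∅ - postVar (SigmaMat K σn2) p {q} ≤ δ) →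
    (Real.log (subMat (SigmaMat K σn2) (a ∪ s) (a ∪ s)).det
        - Real.log (subMat (SigmaMat K σn2) s s).det)
      - (Real.log (subMat (SigmaMat K σn2) (a ∪ (s ∪ b)) (a ∪ (s ∪ b))).det
          - Real.log (subMat (SigmaMat K σn2) (s ∪ b) (s ∪ b)).det)
      ≤ (a.card : ℝ) * Real.log (1 + (b.card : ℝ) * δ / σn2) := by
  have hM := sigma_posdef hKpsd hn
  induction a using Finset.induction_on with
  | empty =>
    intro _ _ _ _
    rw [Finset.empty_union, Finset.empty_union]
    simp
  | @insert p a' hpa ih =>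
    intro h1 h2 h3 h4
    have hps : p ∉ s := Finset.disjoint_left.mp h1 (Finset.mem_insert_self p a')
    have hpb : p ∉ b := Finset.disjoint_left.mp h2 (Finset.mem_insert_self p a')
    have hp1 : p ∉ a' ∪ s := by
      simp only [Finset.mem_union, not_or]; exact ⟨hpa, hps⟩
    have hp2 : p ∉ a' ∪ (s ∪ b) := by
      simp only [Finset.mem_union, not_or]; exact ⟨hpa, hps, hpb⟩
    have e1 : insert p a' ∪ s = insert p (a' ∪ s) := Finset.insert_union p a' s
    have e2 : insert p a' ∪ (s ∪ b) = insert p (a' ∪ (s ∪ b)) := Finset.insert_union p a' _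
    rw [e1, e2, logdet_insert hM p _ hp1, logdet_insert hM p _ hp2]
    set f1 := postVar (SigmaMat K σn2) p (a' ∪ s) with hf1
    set f2 := postVar (SigmaMat K σn2) p (a' ∪ (s ∪ b)) with hf2
    set c : ℝ := (b.card : ℝ) * δ / σn2 with hcdef
    have hc : 0 ≤ c := by positivity
    have hassoc : a' ∪ (s ∪ b) = (a' ∪ s) ∪ b := (Finset.union_assoc a' s b).symm
    have hdrop : f1 - f2 ≤ (b.card : ℝ) * δ := by
      rw [hf1, hf2, hassoc]
      exact var_drop _ δ hsub' p b (a' ∪ s) hp1 hpb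
        (by
          rw [Finset.disjoint_union_right]
          exact ⟨(Finset.disjoint_of_subset_left (Finset.subset_insert p a') h2).symm, h3.symm⟩)
        (fun q hq => h4 p (Finset.mem_insert_self p a') q hq)
    have hf2low : σn2 ≤ f2 := postVar_lower hKpsd hKsymm hn p _ hp2
    have hf1low : σn2 ≤ f1 := postVar_lower hKpsd hKsymm hn p _ hp1
    have hσc : σn2 * c = (b.card : ℝ) * δ := by
      rw [hcdef]; field_simp
    have hL : f1 ≤ f2 * (1 + c) := by nlinarith [mul_le_mul_of_nonneg_right hf2low hc]
    have key : Real.log f1 - Real.log f2 ≤ Real.log (1 + c) := by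
      have h5 := Real.log_le_log (by linarith) hL
      rwa [Real.log_mul (by linarith) (by linarith), ← sub_le_iff_le_add'] at h5
    have ihapp := ih (Finset.disjoint_of_subset_left (Finset.subset_insert p a') h1)
      (Finset.disjoint_of_subset_left (Finset.subset_insert p a') h2) h3
      (fun p' hp' q hq => h4 p' (Finset.mem_insert_of_mem hp') q hq)
    rw [Finset.card_insert_of_notMem hpa]
    push_cast
    linarith [key, ihapp]

end Lemma6Aux

set_option maxHeartbeats 1000000 in
/-- **Lemma 6 of the appendix.** -/
theorem lemma6_entropy_reduction
    {D : Type*} [Fintype D] [DecidableEq D]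
    (r n k m : ℕ) (col : D → ℕ)
    (K : D → D → ℝ) (σs2 σn2 l1 ξ : ℝ)
    (hr : 1 ≤ r) (hk1 : 1 ≤ k) (hkr : k ≤ r) (hm : 1 ≤ m)
    (hs : 0 < σs2) (hn : 0 < σn2) (hl1 : 0 < l1)
    (hξ : ξ = Real.exp (-((m : ℝ) + 1) ^ 2 / (2 * l1 ^ 2)))
    (hKsymm : ∀ p q : D, K p q = K q p)
    (hKpsd : (Matrix.of K).PosSemidef)
    (hKdiag : ∀ p : D, K p p = σs2)
    (hcol : ∀ p : D, 1 ≤ col p ∧ col p ≤ n)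
    (hcolcard : ∀ i : ℕ, 1 ≤ i → i ≤ n → (column col i).card = r)
    (hdecay : ∀ p q : D, (m : ℤ) + 1 ≤ |(col p : ℤ) - (col q : ℤ)| → |K p q| ≤ σs2 * ξ)
    (hsub : ∀ (p q : D) (A : Finset D), p ∉ A → q ∉ A → p ≠ q →
      postVar (SigmaMat K σn2) p A - postVar (SigmaMat K σn2) p (insert q A)
        ≤ postVar (SigmaMat K σn2) p ∅ - postVar (SigmaMat K σn2) p {q})
    (i t : ℕ) (hi1 : 2 * m + 2 ≤ i) (hi2 : i ≤ n) (ht1 : 1 ≤ t) (ht2 : t ≤ i - 2 * m - 1)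
    (x : ℕ → Finset D)
    (hx : ∀ j : ℕ, t ≤ j → j ≤ i → x j ⊆ column col j ∧ (x j).card = k) :
    condEnt (SigmaMat K σn2) (x t)
        (seg x (t + 1) (i - m - 1) ∪ seg (ucomp col x) (i - 2 * m) i)
        - condEnt (SigmaMat K σn2) (x t)
            ((seg x (t + 1) (i - m - 1) ∪ seg (ucomp col x) (i - 2 * m) i) ∪ x (i - m))
      ≤ (k : ℝ) ^ 2 * Real.log (1 + ξ ^ 2 / ((σn2 / σs2) * (1 + σn2 / σs2))) := by
  classical
  have hM : (SigmaMat K σn2).PosDef := Lemma6Aux.sigma_posdef hKpsd hn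
  have hsym := Lemma6Aux.sigma_symm (σn2 := σn2) hKsymm
  have hmi : t + 2 * m + 1 ≤ i := by omega
  set a := x t with ha
  set b := x (i - m) with hb
  set s := seg x (t + 1) (i - m - 1) ∪ seg (ucomp col x) (i - 2 * m) i with hsdef
  -- column facts
  have hcolx : ∀ {j : ℕ} {d : D}, t ≤ j → j ≤ i → d ∈ x j → col d = j := by
    intro j d hj1 hj2 hd
    have h := (hx j hj1 hj2).1 hd
    exact (Finset.mem_filter.mp h).2
  have hcolu : ∀ {j : ℕ} {d : D}, d ∈ ucomp col x j → col d = j := by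
    intro j d hd
    exact (Finset.mem_filter.mp (Finset.mem_sdiff.mp hd).1).2
  have hcola : ∀ d ∈ a, col d = t := fun d hd => hcolx le_rfl (by omega) hd
  have hcolb : ∀ d ∈ b, col d = i - m := fun d hd => hcolx (by omega) (by omega) hd
  -- disjointness
  have hads : Disjoint a s := by
    rw [Finset.disjoint_left]
    intro d hd hds
    have hcd : col d = t := hcola d hd
    rcases Finset.mem_union.mp hds with h | h
    · obtain ⟨j, hj, hdj⟩ := Finset.mem_biUnion.mp h
      rw [Finset.mem_Icc] at hj
      have : col d = j := hcolx (by omega) (by omega) hdj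
      omega
    · obtain ⟨j, hj, hdj⟩ := Finset.mem_biUnion.mp h
      rw [Finset.mem_Icc] at hj
      have : col d = j := hcolu hdj
      omega
  have hadb : Disjoint a b := by
    rw [Finset.disjoint_left]
    intro d hd hdb
    have h1 : col d = t := hcola d hd
    have h2 : col d = i - m := hcolb d hdb
    omega
  have hsb : Disjoint s b := by
    rw [Finset.disjoint_left]
    intro d hds hdb
    have hcd : col d = i - m := hcolb d hdb
    rcases Finset.mem_union.mp hds with h | h
    · obtain ⟨j, hj, hdj⟩ := Finset.mem_biUnion.mp h
      rw [Finset.mem_Icc] at hj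
      have : col d = j := hcolx (by omega) (by omega) hdj
      omega
    · obtain ⟨j, hj, hdj⟩ := Finset.mem_biUnion.mp h
      rw [Finset.mem_Icc] at hj
      have hj2 : col d = j := hcolu hdj
      have : d ∉ x j := (Finset.mem_sdiff.mp hdj).2
      rw [hj2] at hcd
      rw [hcd] at this
      exact this hdb
  have hdisj_asb : Disjoint a (s ∪ b) := by
    rw [Finset.disjoint_union_right]
    exact ⟨hads, hadb⟩
  -- pair bound
  have hξpos : 0 < ξ := hξ ▸ Real.exp_pos _
  set δ : ℝ := σs2 ^ 2 * ξ ^ 2 / (σs2 + σn2) with hδdef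
  have hδ : 0 ≤ δ := by positivity
  have hpair : ∀ p ∈ a, ∀ q ∈ b,
      postVar (SigmaMat K σn2) p ∅ - postVar (SigmaMat K σn2) p {q} ≤ δ := by
    intro p hp q hq
    have hcp : col p = t := hcola p hp
    have hcq : col q = i - m := hcolb q hq
    have hne : p ≠ q := by
      intro h
      rw [h] at hcp
      omega
    have hKb : |K p q| ≤ σs2 * ξ := by
      apply hdecay
      rw [hcp, hcq]
      have h2 : (m : ℤ) + 1 ≤ ((i - m : ℕ) : ℤ) - (t : ℤ) := by omega
      calc (m : ℤ) + 1 ≤ ((i - m : ℕ) : ℤ) - (t : ℤ) := h2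
        _ ≤ |(t : ℤ) - ((i - m : ℕ) : ℤ)| := by
            rw [abs_sub_comm]; exact le_abs_self _
    rw [Lemma6Aux.postVar_empty, Lemma6Aux.postVar_single hM hsym p q]
    have hqq' : SigmaMat K σn2 q q = σs2 + σn2 := by
      simp [SigmaMat, hKdiag]
    have hpq' : SigmaMat K σn2 p q = K p q := by
      simp [SigmaMat, hne]
    rw [hpq', hqq']
    have hKK : K p q * K p q ≤ (σs2 * ξ) ^ 2 := by
      have := mul_self_le_mul_self (abs_nonneg (K p q)) hKb
      rw [abs_mul_abs_self] at this
      nlinarith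
    have hpos : 0 < σs2 + σn2 := by linarith
    rw [hδdef]
    have hexp : SigmaMat K σn2 p p
        - (SigmaMat K σn2 p p - K p q * ((σs2 + σn2)⁻¹ * K p q))
        = K p q * K p q / (σs2 + σn2) := by
      field_simp
      ring
    rw [hexp]
    rw [div_le_div_iff₀ hpos hpos]
    nlinarith [hKK]
  -- telescoping bound
  have htel := Lemma6Aux.telescope hKpsd hKsymm hn hδ hsub b s a hads hadb hsb hpair
  rw [Lemma6Aux.condEnt_sub hM a s (s ∪ b) hads hdisj_asb]
  have hcard_a : a.card = k := (hx t le_rfl (by omega)).2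
  have hcard_b : b.card = k := (hx (i - m) (by omega) (by omega)).2
  rw [hcard_a, hcard_b] at htel
  set c0 : ℝ := δ / σn2 with hc0def
  have hc0 : 0 ≤ c0 := by positivity
  have hkc0 : (k : ℝ) * δ / σn2 = (k : ℝ) * c0 := by
    rw [hc0def]; ring
  rw [hkc0] at htel
  have hlogk : Real.log (1 + (k : ℝ) * c0) ≤ (k : ℝ) * Real.log (1 + c0) := by
    have hbern : 1 + (k : ℝ) * c0 ≤ (1 + c0) ^ k := one_add_mul_le_pow (by linarith) k
    have h5 := Real.log_le_log (by positivity) hbern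
    rwa [Real.log_pow] at h5
  have hlog0 : 0 ≤ Real.log (1 + c0) := Real.log_nonneg (by linarith)
  have hlogk0 : 0 ≤ Real.log (1 + (k : ℝ) * c0) := Real.log_nonneg (by nlinarith)
  have hc0eq : c0 = ξ ^ 2 / ((σn2 / σs2) * (1 + σn2 / σs2)) := by
    rw [hc0def, hδdef]
    field_simp
  rw [← hc0eq]
  have hk0 : (1 : ℝ) ≤ (k : ℝ) := by exact_mod_cast hk1
  calc (1/2 : ℝ) * ((Real.log (subMat (SigmaMat K σn2) (a ∪ s) (a ∪ s)).det
          - Real.log (subMat (SigmaMat K σn2) s s).det)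
        - (Real.log (subMat (SigmaMat K σn2) (a ∪ (s ∪ b)) (a ∪ (s ∪ b))).det
          - Real.log (subMat (SigmaMat K σn2) (s ∪ b) (s ∪ b)).det))
      ≤ (1/2 : ℝ) * ((k : ℝ) * Real.log (1 + (k : ℝ) * c0)) := by linarith
    _ ≤ (1/2 : ℝ) * ((k : ℝ) * ((k : ℝ) * Real.log (1 + c0))) := by nlinarith
    _ ≤ (k : ℝ) ^ 2 * Real.log (1 + c0) := by nlinarith
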